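/- Define C_p = (2 − 2^{2p})·B_{2p}/(2p)! and C_p^{(1)} = Σ_{q=0}^p C_q·C_{p−q}. Then for all p ≥ 1, C_p^{(1)} = ((2p−1)/(1 − 2^{1−2p}))·C_p; equivalently Σ_{q=0}^p C_q C_{p−q} = ((2p−1)/(1−2^{1−2p}))·C_p. -/

import Mathlib

open Finset

/-- `C_p = (2 - 2^{2p}) B_{2p}/(2p)!`. -/
noncomputable def Cseq (p : ℕ) : ℚ :=
  (2 - 2 ^ (2 * p)) * bernoulli (2 * p) / (Nat.factorial (2 * p) : ℚ)

open PowerSeries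

noncomputable def Bq : ℚ⟦X⟧ := bernoulliPowerSeries ℚ
noncomputable def Eq' : ℚ⟦X⟧ := PowerSeries.exp ℚ

lemma coeff_Bq (n : ℕ) : PowerSeries.coeff n Bq = bernoulli n / n.factorial := by
  simp [Bq, bernoulliPowerSeries]

lemma coeff_Eq (n : ℕ) : PowerSeries.coeff n Eq' = 1 / n.factorial := by
  simp [Eq', PowerSeries.coeff_exp]

lemma deriv_Eq : d⁄dX ℚ Eq' = Eq' := by
  ext n
  rw [PowerSeries.coeff_derivative, coeff_Eq, coeff_Eq, Nat.factorial_succ]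
  have h1 : (n.factorial : ℚ) ≠ 0 := Nat.cast_ne_zero.2 n.factorial_ne_zero
  have h2 : ((n:ℚ) + 1) ≠ 0 := by positivity
  push_cast
  field_simp

lemma rescale_X' (a : ℚ) : rescale a (X : ℚ⟦X⟧) = PowerSeries.C a * X := by
  ext n
  rw [PowerSeries.coeff_rescale, PowerSeries.coeff_C_mul, PowerSeries.coeff_X]
  split_ifs with h
  · simp [h]
  · simp

lemma hE2 : rescale (2:ℚ) Eq' = Eq' ^ 2 := by
  rw [Eq', PowerSeries.exp_pow_eq_rescale_exp]
  norm_num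

lemma h1' : Bq * (Eq' - 1) = X := bernoulliPowerSeries_mul_exp_sub_one ℚ

lemma hC2 : (PowerSeries.C) 2 = (2 : ℚ⟦X⟧) := by
  exact map_ofNat _ 2

lemma h2' : rescale (2:ℚ) Bq * (Eq'^2 - 1) = 2 * X := by
  have h := congrArg (rescale (2:ℚ)) h1'
  rw [map_mul, map_sub, map_one, hE2, rescale_X', hC2] at h
  exact h

lemma hD' : rescale (2:ℚ) Bq * (2 * Eq'^2) + (Eq'^2 - 1) * (d⁄dX ℚ (rescale (2:ℚ) Bq)) = 2 := by
  have h := congrArg (d⁄dX ℚ) h2'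
  rw [Derivation.leibniz, Derivation.leibniz, map_sub, Derivation.map_one_eq_zero,
    Derivation.leibniz_pow, deriv_Eq, derivative_X] at h
  simp only [smul_eq_mul, nsmul_eq_mul, pow_one, sub_zero, mul_one] at h
  have h2C : d⁄dX ℚ (2 : ℚ⟦X⟧) = 0 := by rw [← hC2, derivative_C]
  rw [h2C, mul_zero, add_zero] at h
  linear_combination h

lemma hEne : (Eq'^2 - 1 : ℚ⟦X⟧) ≠ 0 := by
  intro h
  have h2 := congrArg (PowerSeries.coeff 1) h
  rw [← hE2] at h2
  simp [PowerSeries.coeff_rescale, coeff_Eq, PowerSeries.coeff_one] at h2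

lemma keyPS : (2 * Bq - rescale (2:ℚ) Bq)^2
    = rescale (2:ℚ) Bq - X * d⁄dX ℚ (rescale (2:ℚ) Bq) := by
  apply mul_right_cancel₀ (pow_ne_zero 2 hEne)
  have L : (2 * Bq - rescale (2:ℚ) Bq) * (Eq'^2 - 1) = 2*X*Eq' := by
    linear_combination (2*(Eq'+1)) * h1' - h2'
  calc (2 * Bq - rescale (2:ℚ) Bq)^2 * (Eq'^2-1)^2
      = ((2 * Bq - rescale (2:ℚ) Bq) * (Eq'^2-1))^2 := by ring
    _ = (2*X*Eq')^2 := by rw [L]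
    _ = (rescale (2:ℚ) Bq - X * d⁄dX ℚ (rescale (2:ℚ) Bq)) * (Eq'^2-1)^2 := by
        linear_combination (-(Eq'^2-1) - 2*X*Eq'^2) * h2' + (X*(Eq'^2-1)) * hD'

lemma coeff_G (n : ℕ) :
    PowerSeries.coeff n (2 * Bq - rescale (2:ℚ) Bq)
      = (2 - 2^n) * bernoulli n / n.factorial := by
  rw [map_sub, ← hC2, PowerSeries.coeff_C_mul, PowerSeries.coeff_rescale, coeff_Bq]
  ring

lemma coeff_G_odd {n : ℕ} (h : Odd n) :
    PowerSeries.coeff n (2 * Bq - rescale (2:ℚ) Bq) = 0 := by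
  rw [coeff_G]
  rcases eq_or_ne n 1 with rfl | hn
  · norm_num
  · have h1 : 1 < n := by rcases h with ⟨k, rfl⟩; omega
    rw [bernoulli_eq_bernoulli'_of_ne_one hn, bernoulli'_eq_zero_of_odd h h1]
    ring

lemma sum_even_its (g : ℕ → ℚ) (hodd : ∀ k, Odd k → g k = 0) (n : ℕ) :
    ∑ k ∈ range (2*n+1), g k = ∑ q ∈ range (n+1), g (2*q) := by
  induction n with
  | zero => simp
  | succ n ih =>
      rw [show 2*(n+1)+1 = (2*n+1)+1+1 by ring, sum_range_succ, sum_range_succ, ih,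
        sum_range_succ, hodd (2*n+1) ⟨n, by ring⟩, show 2*n+1+1 = 2*(n+1) by ring]
      rw [sum_range_succ, sum_range_succ]
      ring

theorem C_convolution (p : ℕ) (hp : 1 ≤ p) :
    ∑ q ∈ Finset.range (p + 1), Cseq q * Cseq (p - q) =
      ((2 * (p : ℚ) - 1) / (1 - (2 : ℚ) ^ (1 - 2 * (p : ℤ)))) * Cseq p := by
  obtain ⟨m, rfl⟩ : ∃ m, p = m + 1 := ⟨p - 1, by omega⟩
  have hk := congrArg (PowerSeries.coeff (2*(m+1))) keyPS
  rw [sq, PowerSeries.coeff_mul, Finset.Nat.sum_antidiagonal_eq_sum_range_succ_mk,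
    sum_even_its (fun i => PowerSeries.coeff i (2 * Bq - rescale (2:ℚ) Bq)
      * PowerSeries.coeff (2*(m+1) - i) (2 * Bq - rescale (2:ℚ) Bq))
      (fun k hkk => by simp only [coeff_G_odd hkk, zero_mul]) (m+1)] at hk
  have hL : ∑ q ∈ Finset.range (m+1+1),
      (PowerSeries.coeff (2*q) (2 * Bq - rescale (2:ℚ) Bq)
        * PowerSeries.coeff (2*(m+1) - 2*q) (2 * Bq - rescale (2:ℚ) Bq))
      = ∑ q ∈ Finset.range (m+1+1), Cseq q * Cseq (m+1-q) := by
    apply Finset.sum_congr rfl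
    intro q hq
    have hq' : q ≤ m+1 := by simpa [Nat.lt_succ_iff] using hq
    rw [coeff_G, coeff_G, show 2*(m+1) - 2*q = 2*((m+1)-q) by omega]
    simp only [Cseq]
  rw [hL] at hk
  have hx : PowerSeries.coeff (2*(m+1)) (X * d⁄dX ℚ (rescale (2:ℚ) Bq))
      = PowerSeries.coeff (2*m+1) (d⁄dX ℚ (rescale (2:ℚ) Bq)) := by
    rw [show 2*(m+1) = (2*m+1)+1 by ring, PowerSeries.coeff_succ_X_mul]
  rw [map_sub, hx, PowerSeries.coeff_derivative, PowerSeries.coeff_rescale,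
    PowerSeries.coeff_rescale, coeff_Bq, coeff_Bq, show 2*m+1+1 = 2*(m+1) by ring] at hk
  rw [hk]
  simp only [Cseq]
  have hzp : (2:ℚ) ^ ((1:ℤ) - 2 * ((m+1 : ℕ) : ℤ)) = 2 / 2^(2*(m+1)) := by
    rw [show ((1:ℤ) - 2 * ((m+1 : ℕ) : ℤ)) = 1 - (2*(m+1) : ℕ) by push_cast; ring,
      zpow_sub₀ two_ne_zero, zpow_one, zpow_natCast]
  rw [hzp]
  push_cast
  have hpow : (2:ℚ)^(2*(m+1)) ≠ 0 := by positivity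
  have hne2 : (2:ℚ)^(2*(m+1)) ≠ 2 := by
    have h4 : (2:ℚ)^(2*(m+1)) = 4 * 4^m := by
      rw [pow_mul, pow_succ]
      norm_num
      ring
    have : (1:ℚ) ≤ 4^m := one_le_pow₀ (by norm_num)
    rw [h4]
    nlinarith
  have hF : ((2*(m+1)).factorial : ℚ) ≠ 0 := Nat.cast_ne_zero.2 (Nat.factorial_ne_zero _)
  have hden : 1 - 2/(2:ℚ)^(2*(m+1)) ≠ 0 := by
    intro h
    apply hne2
    field_simp at h
    linarith
  rw [div_mul_eq_mul_div, eq_div_iff hden]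
  field_simp
  ring
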